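/- Let K = 1 and assume a_{10} > 1, a_{11} > 1 and (a_{10} − a_{11})² − a_{1•} > 0. Then the LOOCV squared prediction error PE is uniquely minimized over [0, ∞) at λ* = a_{10} a_{11} / ( (a_{10} − a_{11})² − a_{1•} ): one has PE(λ*) < PE(λ) for every λ ≥ 0 with λ ≠ λ*. -/

import Mathlib

/-- Leave-one-out cross-validated squared prediction error for a saturated model with `K`
categories, counts `a0 k` (nonevents) and `a1 k` (events), and ridge penalty `l`. -/
noncomputable def loocvPE (K : ℕ) (a0 a1 : Fin K → ℕ) (l : ℝ) : ℝ :=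
  (1 / ∑ k : Fin K, ((a0 k : ℝ) + (a1 k : ℝ))) *
    ∑ k : Fin K,
      ((a0 k : ℝ) *
          (((a1 k : ℝ) + 2 * l) / ((a0 k : ℝ) + (a1 k : ℝ) - 1 + 4 * l)) ^ 2 +
       (a1 k : ℝ) *
          (1 - ((a1 k : ℝ) - 1 + 2 * l) / ((a0 k : ℝ) + (a1 k : ℝ) - 1 + 4 * l)) ^ 2)

/-- For `K = 1` with `a_{10}, a_{11} > 1` and `(a_{10} − a_{11})² − a_{1•} > 0`, the LOOCV
squared prediction error is uniquely minimized over `[0, ∞)` at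
`λ* = a_{10} a_{11} / ((a_{10} − a_{11})² − a_{1•})`. -/
theorem stmt15 (a10 a11 : ℕ) (h0 : 1 < a10) (h1 : 1 < a11)
    (hgt : 0 < ((a10 : ℝ) - (a11 : ℝ)) ^ 2 - ((a10 : ℝ) + (a11 : ℝ))) :
    ∀ l : ℝ, 0 ≤ l →
      l ≠ (a10 : ℝ) * (a11 : ℝ) /
          (((a10 : ℝ) - (a11 : ℝ)) ^ 2 - ((a10 : ℝ) + (a11 : ℝ))) →
      loocvPE 1 (fun _ => a10) (fun _ => a11)
        ((a10 : ℝ) * (a11 : ℝ) /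
          (((a10 : ℝ) - (a11 : ℝ)) ^ 2 - ((a10 : ℝ) + (a11 : ℝ)))) <
      loocvPE 1 (fun _ => a10) (fun _ => a11) l := by

  intro l hl hne
  set A : ℝ := (a10 : ℝ) with hAdef
  set B : ℝ := (a11 : ℝ) with hBdef
  have hA : (2:ℝ) ≤ A := by
    rw [hAdef]; exact_mod_cast h0
  have hB : (2:ℝ) ≤ B := by
    rw [hBdef]; exact_mod_cast h1
  set Q : ℝ := (A - B) ^ 2 - (A + B) with hQdef
  have hQ : 0 < Q := hgt
  set m : ℝ := A * B / Q with hmdef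
  have hm : Q * m = A * B := by
    rw [hmdef]; field_simp
  have hm0 : 0 ≤ m := by
    rw [hmdef]; positivity
  have hD : ∀ x : ℝ, 0 ≤ x → 0 < A + B - 1 + 4 * x := by
    intro x hx; linarith
  have hn : 0 < 1 / (A + B) := by positivity
  simp only [loocvPE, Fin.sum_univ_one]
  apply mul_lt_mul_of_pos_left _ hn
  have hEq : ∀ x : ℝ, 0 ≤ x →
      A * ((B + 2 * x) / (A + B - 1 + 4 * x)) ^ 2 +
        B * (1 - (B - 1 + 2 * x) / (A + B - 1 + 4 * x)) ^ 2 =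
      (A * (B + 2 * x) ^ 2 + B * (A + 2 * x) ^ 2) / (A + B - 1 + 4 * x) ^ 2 := by
    intro x hx
    have hd := (hD x hx).ne'
    have h1x : 1 - (B - 1 + 2 * x) / (A + B - 1 + 4 * x) = (A + 2 * x) / (A + B - 1 + 4 * x) := by
      rw [eq_div_iff hd, sub_mul, div_mul_cancel₀ _ hd]; ring
    rw [h1x, div_pow, div_pow, ← mul_div_assoc, ← mul_div_assoc, ← add_div]
  rw [hEq m hm0, hEq l hl]
  rw [div_lt_div_iff₀ (pow_pos (hD m hm0) 2) (pow_pos (hD l hl) 2)]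
  have key : (A * (B + 2 * l) ^ 2 + B * (A + 2 * l) ^ 2) * (A + B - 1 + 4 * m) ^ 2 -
      (A * (B + 2 * m) ^ 2 + B * (A + 2 * m) ^ 2) * (A + B - 1 + 4 * l) ^ 2 =
      (4 * ((A + B) + (A + B - 2) * (A - B) ^ 2)) * (l - m) ^ 2 := by
    have hQ' : ((A - B) ^ 2 - (A + B)) * m = A * B := by rw [← hQdef]; exact hm
    linear_combination (8 * (l - m) * (A + B - 1 + 4 * l)) * hQ'
  have hc : 0 < 4 * ((A + B) + (A + B - 2) * (A - B) ^ 2) := by nlinarith [sq_nonneg (A - B)]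
  have hlm : 0 < (l - m) ^ 2 := by
    have : l - m ≠ 0 := sub_ne_zero.mpr hne
    positivity
  nlinarith [mul_pos hc hlm]
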